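/- arXiv:math/0011182 — 2 statements merged into one kernel-verified Lean document; each statement's English description precedes it below -/
import Mathlib

section
/- Let R be a PID and A a free R-algebra (free as an R-module). If M is an A-module such that every finite subset of M is contained in an A-free and R-pure submodule of M, then every countably generated R-submodule of M is a free R-module (i.e., M is ℵ₁-free as an R-module). -/
open Submodule Set

private lemma fg_of_le_fg {R M : Type*} [Ring R] [IsNoetherianRing R] [AddCommGroup M]
    [Module R M] {P Q : Submodule R M} (hle : P ≤ Q) (hQ : Q.FG) : P.FG := by
  haveI : IsNoetherian R ↥Q := isNoetherian_of_fg_of_noetherian Q hQ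
  have : P = Submodule.map Q.subtype (Submodule.comap Q.subtype P) := by
    rw [Submodule.map_comap_subtype, inf_eq_right.mpr hle]
  rw [this]
  exact Submodule.FG.map _ (IsNoetherian.noetherian _)

private lemma exists_compl_free {R N : Type} [CommRing R] [IsDomain R] [IsPrincipalIdealRing R]
    [AddCommGroup N] [Module R N] {P Q : Submodule R N} (hle : P ≤ Q) (hQ : Q.FG)
    (hsat : ∀ (r : R) (x : N), r ≠ 0 → r • x ∈ P → x ∈ P) :
    ∃ D : Submodule R N, Disjoint P D ∧ P ⊔ D = Q ∧ Module.Free R ↥D := by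
  haveI : Module.Finite R ↥Q := Module.Finite.iff_fg.mpr hQ
  set P' : Submodule R ↥Q := P.comap Q.subtype with hP'
  haveI : NoZeroSMulDivisors R (↥Q ⧸ P') := by
    constructor
    intro r x hrx
    by_cases hr : r = 0
    · exact Or.inl hr
    right
    obtain ⟨y, rfl⟩ := Submodule.Quotient.mk_surjective P' x
    rw [← Submodule.Quotient.mk_smul P'] at hrx
    rw [Submodule.Quotient.mk_eq_zero] at hrx ⊢
    have hy : r • (y : N) ∈ P := by simpa [hP', Submodule.mem_comap] using hrx
    exact hsat r (y : N) hr hy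
  haveI : Module.Free R (↥Q ⧸ P') := Module.free_of_finite_type_torsion_free'
  obtain ⟨s, hs⟩ := Module.projective_lifting_property P'.mkQ
    (LinearMap.id : (↥Q ⧸ P') →ₗ[R] (↥Q ⧸ P')) P'.mkQ_surjective
  have hsec : ∀ z : ↥Q ⧸ P', P'.mkQ (s z) = z := fun z => by
    have := congrArg (fun f => f z) hs; simpa using this
  refine ⟨(LinearMap.range s).map Q.subtype, ?_, ?_, ?_⟩
  · rw [disjoint_def]
    rintro x hxP ⟨v, ⟨z, rfl⟩, rfl⟩
    have hz : s z ∈ P' := by simpa [hP', Submodule.mem_comap] using hxP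
    have hz0 : z = 0 := by
      rw [← hsec z, Submodule.mkQ_apply, Submodule.Quotient.mk_eq_zero]; exact hz
    simp [hz0]
  · apply le_antisymm
    · exact sup_le hle (Submodule.map_le_iff_le_comap.mpr (fun v _ => v.2))
    · intro x hx
      set xq : ↥Q := ⟨x, hx⟩ with hxq
      have hdecomp : x = ((xq - s (P'.mkQ xq) : ↥Q) : N) + ((s (P'.mkQ xq) : ↥Q) : N) := by
        push_cast
        exact (sub_add_cancel _ _).symm
      rw [hdecomp]
      refine Submodule.add_mem_sup ?_ ?_
      · have : (xq - s (P'.mkQ xq)) ∈ P' := by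
          have : P'.mkQ (xq - s (P'.mkQ xq)) = 0 := by
            rw [map_sub, hsec]; simp
          rwa [← Submodule.Quotient.mk_eq_zero P', ← Submodule.mkQ_apply]
        simpa [hP', Submodule.mem_comap] using this
      · exact ⟨s (P'.mkQ xq), ⟨P'.mkQ xq, rfl⟩, rfl⟩
  · have hinj : Function.Injective s := by
      intro a b hab
      have := congrArg P'.mkQ hab
      rwa [hsec, hsec] at this
    have e1 : (↥Q ⧸ P') ≃ₗ[R] LinearMap.range s := LinearEquiv.ofInjective s hinj
    have e2 : (LinearMap.range s : Submodule R ↥Q) ≃ₗ[R]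
        (LinearMap.range s).map Q.subtype :=
      Submodule.equivMapOfInjective Q.subtype (Submodule.injective_subtype Q) _
    exact Module.Free.of_equiv (e1.trans e2)

private lemma chain_free {R N : Type} [CommRing R] [IsDomain R] [IsPrincipalIdealRing R]
    [AddCommGroup N] [Module R N]
    (ntf : ∀ (r : R) (x : N), r • x = 0 → r = 0 ∨ x = 0)
    (C : ℕ → Submodule R N) (mono : Monotone C)
    (fg : ∀ n, (C n).FG)
    (sat : ∀ (n : ℕ) (r : R) (x : N), r ≠ 0 → r • x ∈ C n → x ∈ C n)
    (htop : ∀ x : N, ∃ n, x ∈ C n) : Module.Free R N := by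
  classical
  -- extension step
  have step : ∀ (P Q : Submodule R N), P ≤ Q → Q.FG →
      (∀ (r : R) (x : N), r ≠ 0 → r • x ∈ P → x ∈ P) →
      ∀ s : Set N, LinearIndependent R (fun x : s => (x : N)) → span R s = P →
      ∃ t : Set N, s ⊆ t ∧ LinearIndependent R (fun x : t => (x : N)) ∧ span R t = Q := by
    intro P Q hle hQ hsat s hind hspan
    obtain ⟨D, hdisj, hsup, hfree⟩ := exists_compl_free hle hQ hsat
    haveI := hfree
    let b := Module.Free.chooseBasis R ↥D
    set u : Set N := Set.range (fun i => (b i : N)) with hu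
    have hui : LinearIndependent R (fun x : u => (x : N)) := by
      have h1 : LinearIndependent R (fun i => (b i : N)) :=
        b.linearIndependent.map' D.subtype (Submodule.ker_subtype D)
      exact h1.linearIndepOn_id
    have huspan : span R u = D := by
      rw [hu]
      have : (fun i => (b i : N)) = (D.subtype : ↥D →ₗ[R] N) ∘ b := rfl
      rw [this, Set.range_comp, Submodule.span_image, b.span_eq, Submodule.map_top,
        Submodule.range_subtype]
    refine ⟨s ∪ u, Set.subset_union_left, ?_, ?_⟩
    · exact LinearIndepOn.id_union hind hui (by rw [hspan, huspan]; exact hdisj)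
    · rw [Submodule.span_union, hspan, huspan, hsup]
  -- base case, as an extension of ⊥
  have hbotsat : ∀ (r : R) (x : N), r ≠ 0 → r • x ∈ (⊥ : Submodule R N) →
      x ∈ (⊥ : Submodule R N) := by
    intro r x hr hx
    rcases ntf r x (by simpa using hx) with h | h
    · exact absurd h hr
    · simpa using h
  -- recursive construction of the sets
  let T : (n : ℕ) → {s : Set N // LinearIndependent R (fun x : s => (x : N)) ∧ span R s = C n} :=
    Nat.rec
      ⟨(step ⊥ (C 0) bot_le (fg 0) hbotsat ∅ (linearIndependent_empty R N)
          (by simp)).choose,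
        (step ⊥ (C 0) bot_le (fg 0) hbotsat ∅ (linearIndependent_empty R N)
          (by simp)).choose_spec.2⟩
      (fun n ih =>
        ⟨(step (C n) (C (n + 1)) (mono (Nat.le_succ n)) (fg (n + 1)) (sat n) ih.1
            ih.2.1 ih.2.2).choose,
          (step (C n) (C (n + 1)) (mono (Nat.le_succ n)) (fg (n + 1)) (sat n) ih.1
            ih.2.1 ih.2.2).choose_spec.2⟩)
  have hTsub : ∀ n, (T n).1 ⊆ (T (n + 1)).1 := fun n =>
    (step (C n) (C (n + 1)) (mono (Nat.le_succ n)) (fg (n + 1)) (sat n) (T n).1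
      (T n).2.1 (T n).2.2).choose_spec.1
  have hTmono : Monotone (fun n => (T n).1) := monotone_nat_of_le_succ hTsub
  set S : Set N := ⋃ n, (T n).1 with hS
  have hSind : LinearIndependent R (fun x : S => (x : N)) :=
    linearIndepOn_iUnion_of_directed (R := R) (v := (id : N → N)) (hTmono.directed_le) (fun n => (T n).2.1)
  have hSspan : span R S = ⊤ := by
    rw [eq_top_iff]
    intro x _
    obtain ⟨n, hn⟩ := htop x
    have : C n ≤ span R S := by
      rw [← (T n).2.2]
      exact Submodule.span_mono (Set.subset_iUnion (fun n => (T n).1) n)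
    exact this hn
  have hb : Module.Basis S R N := Module.Basis.mk hSind (by rw [← hSspan, Subtype.range_coe])
  exact Module.Free.of_basis hb

section Sat

variable {R : Type} [CommRing R] [IsDomain R] [IsPrincipalIdealRing R]
  {A : Type} [Ring A] [Algebra R A] [Module.Free R A]
  {M : Type} [AddCommGroup M] [Module A M] [Module R M] [IsScalarTower R A M]

omit [IsPrincipalIdealRing R] in
private lemma tf_of_h
    (h : ∀ s : Finset M, ∃ U : Submodule A M, (↑s : Set M) ⊆ (U : Set M) ∧
      Module.Free A U ∧
      (∀ (r : R) (u : M), u ∈ U → (∃ m : M, r • m = u) → ∃ u' ∈ U, r • u' = u)) :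
    ∀ (r : R) (x : M), r • x = 0 → r = 0 ∨ x = 0 := by
  classical
  intro r x hrx
  by_cases hr : r = 0
  · exact Or.inl hr
  right
  obtain ⟨U, hsU, hfree, -⟩ := h {x}
  have hxU : x ∈ U := hsU (by simp)
  haveI := hfree
  let bA := Module.Free.chooseBasis R A
  let bU := Module.Free.chooseBasis A ↥U
  let b := bA.smulTower bU
  have hxu : r • (⟨x, hxU⟩ : ↥U) = 0 := by
    apply Subtype.ext
    simpa using hrx
  have hrepr : r • b.repr ⟨x, hxU⟩ = 0 := by
    rw [← map_smul, hxu, map_zero]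
  have : b.repr ⟨x, hxU⟩ = 0 := by
    ext i
    have := congrArg (fun f => f i) hrepr
    simp only [Finsupp.coe_smul, Pi.smul_apply, smul_eq_mul, Finsupp.coe_zero,
      Pi.zero_apply] at this
    exact (mul_eq_zero.mp this).resolve_left hr
  have : (⟨x, hxU⟩ : ↥U) = 0 := by
    apply b.repr.injective
    simpa using this
  simpa using congrArg Subtype.val this

private lemma exists_sat
    (h : ∀ s : Finset M, ∃ U : Submodule A M, (↑s : Set M) ⊆ (U : Set M) ∧
      Module.Free A U ∧
      (∀ (r : R) (u : M), u ∈ U → (∃ m : M, r • m = u) → ∃ u' ∈ U, r • u' = u))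
    (tf : ∀ (r : R) (x : M), r • x = 0 → r = 0 ∨ x = 0)
    (s : Finset M) :
    ∃ B : Submodule R M, (↑s : Set M) ⊆ (B : Set M) ∧ B.FG ∧
      ∀ (r : R) (x : M), r ≠ 0 → r • x ∈ B → x ∈ B := by
  classical
  obtain ⟨U, hsU, hfree, hpure⟩ := h s
  haveI := hfree
  let bA := Module.Free.chooseBasis R A
  let bU := Module.Free.chooseBasis A ↥U
  let b := bA.smulTower bU
  set V := ↥U
  -- the finset inside V
  set Sv : Set V := (fun v : V => (v : M)) ⁻¹' (↑s : Set M) with hSv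
  have hSvfin : Sv.Finite := Set.Finite.preimage (Subtype.val_injective.injOn) s.finite_toSet
  set Wv : Submodule R V := span R Sv with hWv
  set κ : Set (Module.Free.ChooseBasisIndex R A × Module.Free.ChooseBasisIndex A ↥U) :=
    ⋃ v ∈ Sv, ↑(b.repr v).support with hκ
  have hκfin : κ.Finite := Set.Finite.biUnion hSvfin (fun v _ => (b.repr v).support.finite_toSet)
  set F : Submodule R V := span R (b '' κ) with hF
  have hFfg : F.FG := Submodule.fg_def.mpr ⟨b '' κ, hκfin.image b, rfl⟩
  have hWF : Wv ≤ F := by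
    rw [hWv, Submodule.span_le]
    intro v hv
    refine b.mem_span_image.mpr ?_
    rw [hκ]
    exact Set.subset_biUnion_of_mem
      (u := fun v : V => ((b.repr v).support :
        Set (Module.Free.ChooseBasisIndex R A × Module.Free.ChooseBasisIndex A ↥U))) hv
  -- the saturation
  set Bv : Submodule R V :=
    { carrier := {x : V | ∃ r : R, r ≠ 0 ∧ r • x ∈ Wv}
      add_mem' := by
        rintro x y ⟨r, hr, hx⟩ ⟨r', hr', hy⟩
        refine ⟨r * r', mul_ne_zero hr hr', ?_⟩
        rw [smul_add]
        exact add_mem (by rw [mul_comm, mul_smul]; exact Wv.smul_mem _ hx)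
          (by rw [mul_smul]; exact Wv.smul_mem _ hy)
      zero_mem' := ⟨1, one_ne_zero, by simp⟩
      smul_mem' := by
        rintro c x ⟨r, hr, hx⟩
        exact ⟨r, hr, by rw [smul_comm]; exact Wv.smul_mem c hx⟩ } with hBv
  have hBvF : Bv ≤ F := by
    rintro x ⟨r, hr, hx⟩
    have hx' : r • x ∈ F := hWF hx
    have hsupp : (↑(b.repr (r • x)).support : Set _) ⊆ κ := b.mem_span_image.mp hx'
    rw [map_smul, Finsupp.support_smul_eq hr] at hsupp
    exact b.mem_span_image.mpr hsupp
  have hBvfg : Bv.FG := fg_of_le_fg hBvF hFfg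
  refine ⟨Submodule.map ((U.subtype).restrictScalars R) Bv, ?_, hBvfg.map _, ?_⟩
  · intro y hy
    have hyU : y ∈ U := hsU hy
    exact ⟨⟨y, hyU⟩, ⟨1, one_ne_zero, Submodule.subset_span (by simpa [hSv] using hy)⟩, rfl⟩
  · rintro r x hr hrx
    obtain ⟨v, hv, hvx⟩ := hrx
    obtain ⟨r', hr', hr'v⟩ := hv
    have hvx' : (v : M) = r • x := hvx
    have key1 : ((r' • v : V) : M) = (r' * r) • x := by
      rw [Submodule.coe_smul_of_tower, hvx', ← mul_smul]
    -- (r' * r) • x ∈ U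
    have hmem : (r' * r) • x ∈ U := key1 ▸ (r' • v).2
    -- x itself is in U, by purity and torsion-freeness
    have hxU : x ∈ U := by
      obtain ⟨u', hu'U, hu'⟩ := hpure (r' * r) ((r' * r) • x) hmem ⟨x, rfl⟩
      have h0 : (r' * r) • (u' - x) = 0 := by rw [smul_sub, hu', sub_self]
      rcases tf _ _ h0 with h1 | h1
      · exact absurd h1 (mul_ne_zero hr' hr)
      · exact (sub_eq_zero.mp h1) ▸ hu'U
    refine ⟨⟨x, hxU⟩, ⟨r' * r, mul_ne_zero hr' hr, ?_⟩, rfl⟩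
    have hcoe : (((r' * r) • (⟨x, hxU⟩ : V) : V) : M) = ((r' • v : V) : M) := by
      rw [Submodule.coe_smul_of_tower, key1]
    have heq : (r' * r) • (⟨x, hxU⟩ : V) = r' • v := Subtype.val_injective hcoe
    rw [heq]
    exact hr'v

end Sat


/-- Observation 2.3, Pontryagin-type criterion: Let `R` be a PID
and `A` a free `R`-algebra. If `M` is an `A`-module such that every finite
subset of `M` is contained in an `A`-free and `R`-pure `A`-submodule, then
every countably generated `R`-submodule of `M` is a free `R`-module, i.e. `M`
is `ℵ₁`-free as an `R`-module. -/
theorem stmt9 {R : Type} [CommRing R] [IsDomain R] [IsPrincipalIdealRing R]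
    {A : Type} [Ring A] [Algebra R A] [Module.Free R A]
    {M : Type} [AddCommGroup M] [Module A M] [Module R M] [IsScalarTower R A M]
    (h : ∀ s : Finset M, ∃ U : Submodule A M, (↑s : Set M) ⊆ (U : Set M) ∧
      Module.Free A U ∧
      (∀ (r : R) (u : M), u ∈ U → (∃ m : M, r • m = u) → ∃ u' ∈ U, r • u' = u)) :
    ∀ N : Submodule R M, (∃ S : Set M, S.Countable ∧ N = Submodule.span R S) →
      Module.Free R N := by
  classical
  intro N hN
  obtain ⟨S, hSc, rfl⟩ := hN
  have tf := tf_of_h h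
  rcases Set.eq_empty_or_nonempty S with rfl | hSne
  · rw [Submodule.span_empty]
    infer_instance
  obtain ⟨f, rfl⟩ := hSc.exists_eq_range hSne
  have key : ∀ s : Finset M, ∃ p : Submodule R M × Finset M,
      (↑s : Set M) ⊆ (p.1 : Set M) ∧ span R (↑p.2 : Set M) = p.1 ∧
      ∀ (r : R) (x : M), r ≠ 0 → r • x ∈ p.1 → x ∈ p.1 := by
    intro s
    obtain ⟨B, h1, h2, h3⟩ := exists_sat h tf s
    obtain ⟨t, ht⟩ := h2
    exact ⟨(B, t), h1, ht, h3⟩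
  let G : (n : ℕ) → {p : Submodule R M × Finset M //
      span R (↑p.2 : Set M) = p.1 ∧
      (∀ (r : R) (x : M), r ≠ 0 → r • x ∈ p.1 → x ∈ p.1) ∧ f n ∈ p.1} :=
    Nat.rec
      ⟨(key {f 0}).choose,
        (key {f 0}).choose_spec.2.1,
        (key {f 0}).choose_spec.2.2,
        (key {f 0}).choose_spec.1 (by simp)⟩
      (fun n ih =>
        ⟨(key (insert (f (n + 1)) ih.1.2)).choose,
          (key (insert (f (n + 1)) ih.1.2)).choose_spec.2.1,
          (key (insert (f (n + 1)) ih.1.2)).choose_spec.2.2,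
          (key (insert (f (n + 1)) ih.1.2)).choose_spec.1 (by simp)⟩)
  have hGsucc : ∀ n : ℕ, (G (n + 1)).1 = (key (insert (f (n + 1)) (G n).1.2)).choose :=
    fun n => rfl
  set B : ℕ → Submodule R M := fun n => (G n).1.1 with hB
  have hBfg : ∀ n, (B n).FG := fun n => ⟨(G n).1.2, (G n).2.1⟩
  have hBmono : Monotone B := by
    apply monotone_nat_of_le_succ
    intro n
    have hsub : (↑(G n).1.2 : Set M) ⊆ ((G (n + 1)).1.1 : Set M) := by
      intro x hx
      have hspec := (key (insert (f (n + 1)) (G n).1.2)).choose_spec.1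
      have : x ∈ (key (insert (f (n + 1)) (G n).1.2)).choose.1 := by
        apply hspec
        simp only [Finset.coe_insert, Set.mem_insert_iff]
        exact Or.inr hx
      rw [hGsucc n]
      exact this
    calc B n = span R (↑(G n).1.2 : Set M) := ((G n).2.1).symm
    _ ≤ B (n + 1) := span_le.mpr hsub
  set NN : Submodule R M := span R (Set.range f) with hNN
  set C : ℕ → Submodule R ↥NN := fun n => Submodule.comap NN.subtype (B n) with hC
  have hCmono : Monotone C := fun a b hab => Submodule.comap_mono (hBmono hab)
  have hCfg : ∀ n, (C n).FG := by
    intro n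
    apply Submodule.fg_of_fg_map_injective NN.subtype (Submodule.injective_subtype NN)
    rw [Submodule.map_comap_subtype]
    exact fg_of_le_fg inf_le_right (hBfg n)
  have hCsat : ∀ (n : ℕ) (r : R) (x : ↥NN), r ≠ 0 → r • x ∈ C n → x ∈ C n := by
    intro n r x hr hx
    have : r • (x : M) ∈ B n := hx
    exact (G n).2.2.1 r (x : M) hr this
  have ntf : ∀ (r : R) (x : ↥NN), r • x = 0 → r = 0 ∨ x = 0 := by
    intro r x h0
    have : r • (x : M) = 0 := by
      rw [← Submodule.coe_smul, h0, Submodule.coe_zero]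
    rcases tf r (x : M) this with h1 | h1
    · exact Or.inl h1
    · exact Or.inr (Subtype.ext h1)
  have htop : ∀ x : ↥NN, ∃ n, x ∈ C n := by
    intro x
    have hle : NN ≤ ⨆ n, B n := by
      rw [hNN, span_le]
      rintro y ⟨n, rfl⟩
      exact le_iSup B n ((G n).2.2.2)
    have : (x : M) ∈ ⨆ n, B n := hle x.2
    obtain ⟨n, hn⟩ := (Submodule.mem_iSup_of_directed B hBmono.directed_le).mp this
    exact ⟨n, hn⟩
  exact chain_free ntf C hCmono hCfg hCsat htop
end

section
/- With y_v = y_{v,0,g} as defined from branches v in Br(T_C) and g ∈ B̂: if v ≠ w are branches with branch point m = br(v,w), then y_v − y_w ± q_m g = q_{m+1}(y_{v,m+1,g} − y_{w,m+1,g}), where the sign ± is v(m) − w(m) ∈ {+1, −1}. -/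
/-- With `y v = y (v,0,g)` as defined from infinite branches and
`g ∈ B̂`: if `v ≠ w` are branches with branch point `m = br(v,w)`, then
`y v - y w ± q m • g = q (m+1) • (y (v,m+1,g) - y (w,m+1,g))`, where the sign
`±` is `v m - w m ∈ {+1, -1}`; equivalently
`y v - y w = (q m * (v m - w m)) • g + q (m+1) • (y (v,m+1,g) - y (w,m+1,g))`. -/
theorem stmt11 {R : Type} [CommRing R] [IsDomain R] [IsPrincipalIdealRing R]
    [Countable R] (hRnf : ¬ IsField R)
    (s : ℕ → R) (hs : ∀ n, s n ≠ 0)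
    (q : ℕ → R) (hq0 : q 0 = 1) (hq : ∀ n, q (n + 1) = s n * (q n) ^ 2)
    (c : ℕ → ℕ → R) (hc : ∀ n i, n ≤ i → q n * c n i = q i)
    {M : Type} [AddCommGroup M] [Module R M] [TopologicalSpace M]
    [IsTopologicalAddGroup M] [ContinuousConstSMul R M] [T2Space M]
    (node : List Bool → M)   -- τ ↦ τ × α, the finite branches of the tree T_α
    (g : M)
    (hsum : ∀ (u : ℕ → Bool) (n : ℕ), Summable fun i : ℕ =>
      if n ≤ i then
        c n i • node (List.ofFn fun j : Fin i => u j) +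
          (c n i * (bif u i then 1 else 0)) • g
      else 0)
    (y : (ℕ → Bool) → ℕ → M)
    (hy : ∀ (u : ℕ → Bool) (n : ℕ), y u n = ∑' i : ℕ,
      if n ≤ i then
        c n i • node (List.ofFn fun j : Fin i => u j) +
          (c n i * (bif u i then 1 else 0)) • g
      else 0)
    (v w : ℕ → Bool) (m : ℕ) (hbr : ∀ i < m, v i = w i) (hm : v m ≠ w m) :
    y v 0 - y w 0 =
      (q m * ((bif v m then 1 else 0) - (bif w m then 1 else 0))) • g +
        q (m + 1) • (y v (m + 1) - y w (m + 1)) := by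
  classical
  -- abbreviations for the four summand families
  set A : ℕ → M := fun i => if 0 ≤ i then
      c 0 i • node (List.ofFn fun j : Fin i => v j) +
        (c 0 i * (bif v i then 1 else 0)) • g else 0 with hAdef
  set B : ℕ → M := fun i => if 0 ≤ i then
      c 0 i • node (List.ofFn fun j : Fin i => w j) +
        (c 0 i * (bif w i then 1 else 0)) • g else 0 with hBdef
  set A' : ℕ → M := fun i => if m + 1 ≤ i then
      c (m + 1) i • node (List.ofFn fun j : Fin i => v j) +
        (c (m + 1) i * (bif v i then 1 else 0)) • g else 0 with hA'def
  set B' : ℕ → M := fun i => if m + 1 ≤ i then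
      c (m + 1) i • node (List.ofFn fun j : Fin i => w j) +
        (c (m + 1) i * (bif w i then 1 else 0)) • g else 0 with hB'def
  have hsA : Summable A := hsum v 0
  have hsB : Summable B := hsum w 0
  have hsA' : Summable A' := hsum v (m + 1)
  have hsB' : Summable B' := hsum w (m + 1)
  have hc0 : ∀ i, c 0 i = q i := by
    intro i
    have := hc 0 i (Nat.zero_le i)
    rwa [hq0, one_mul] at this
  set x : R := q m * ((bif v m then 1 else 0) - (bif w m then 1 else 0)) with hxdef
  have key : ∀ i, A i - B i =
      (if i = m then x • g else 0) + q (m + 1) • (A' i - B' i) := by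
    intro i
    rcases lt_trichotomy i m with hlt | heq | hgt
    · have h1 : ¬ (m + 1 ≤ i) := by omega
      have h2 : i ≠ m := by omega
      have hnode : (List.ofFn fun j : Fin i => v j) = List.ofFn fun j : Fin i => w j := by
        congr 1
        funext j
        exact hbr j (lt_trans j.2 hlt)
      have hbit : v i = w i := hbr i hlt
      simp [hAdef, hBdef, hA'def, hB'def, h1, h2, hnode, hbit]
    · subst heq
      have h1 : ¬ (i + 1 ≤ i) := by omega
      have hnode : (List.ofFn fun j : Fin i => v j) = List.ofFn fun j : Fin i => w j := by
        congr 1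
        funext j
        exact hbr j j.2
      simp only [hAdef, hBdef, hA'def, hB'def, if_pos (Nat.zero_le i), if_neg h1,
        if_pos rfl, hnode, sub_self, smul_zero, add_zero]
      rw [hxdef, hc0]
      rw [mul_sub, sub_smul]
      simp
    · have h1 : m + 1 ≤ i := hgt
      have h2 : i ≠ m := by omega
      have hA1 : A i = q (m + 1) • A' i := by
        simp only [hAdef, hA'def, if_pos (Nat.zero_le i), if_pos h1, smul_add,
          smul_smul, hc (m + 1) i h1, hc0, mul_assoc]
        rw [← mul_assoc, hc (m + 1) i h1]
      have hB1 : B i = q (m + 1) • B' i := by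
        simp only [hBdef, hB'def, if_pos (Nat.zero_le i), if_pos h1, smul_add,
          smul_smul, hc (m + 1) i h1, hc0, mul_assoc]
        rw [← mul_assoc, hc (m + 1) i h1]
      rw [hA1, hB1, if_neg h2, zero_add, smul_sub]
  rw [hy v 0, hy w 0, hy v (m + 1), hy w (m + 1)]
  rw [← Summable.tsum_sub hsA hsB, tsum_congr key,
    Summable.tsum_add ((hasSum_ite_eq m (x • g)).summable) (((hsA'.sub hsB').const_smul (q (m + 1)))),
    (hasSum_ite_eq m (x • g)).tsum_eq, Summable.tsum_const_smul _ (hsA'.sub hsB'),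
    (Summable.tsum_sub hsA' hsB')]
end
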